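/- Let d be an even MPT density with tail index γ, cdf D, and fix p ∈ (0,1) and u > 0. Then the Bayesian false discovery rate of the fixed thresholding procedure, BFDR(ω) = (1−p)(1 − D(ω)) / [(1−p)(1 − D(ω)) + p(1 − D(ω·(1+u)^(−1/2)))], is a strictly decreasing function of ω on [0, ∞) with BFDR(0) = 1 − p, and BFDR(ω) → β* = (1 + (1+u)^(γ/2)·p/(1−p))^(−1) as ω → ∞. In particular, the BFDR of a finite fixed thresholding procedure can only take values in the interval (β*, 1−p]. -/

import Mathlib

open MeasureTheory Filter

/-- Cumulative distribution function of a density `d` with respect to Lebesgue measure. -/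
noncomputable def cdf (d : ℝ → ℝ) (x : ℝ) : ℝ := ∫ t in Set.Iic x, d t

/-- A monotone polynomial tail (MPT) density with tail index `γ` and tail constant `Cd`:
a probability density function that is even (or supported on the nonnegative half-line),
strictly positive on `(0, ∞)`, satisfies `d x * x ^ (γ + 1) → Cd` as `x → ∞`, and has a
monotone likelihood ratio: for every `θ > 1`, `x ↦ d (x / θ) / d x` is strictly increasing
on `(0, ∞)`. -/
structure IsMPT (d : ℝ → ℝ) (γ Cd : ℝ) : Prop where
  gamma_pos : 0 < γ
  Cd_pos : 0 < Cd
  nonneg : ∀ x, 0 ≤ d x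
  integrable : Integrable d
  integral_one : ∫ x, d x = 1
  even_or_halfline : (∀ x, d (-x) = d x) ∨ (∀ x < 0, d x = 0)
  pos : ∀ x, 0 < x → 0 < d x
  tail : Tendsto (fun x => d x * x ^ (γ + 1)) atTop (nhds Cd)
  mlr : ∀ θ : ℝ, 1 < θ → StrictMonoOn (fun x => d (x / θ) / d x) (Set.Ioi 0)

/-- The Bayesian false discovery rate of the fixed thresholding procedure with threshold `ω`. -/
noncomputable def BFDR (d : ℝ → ℝ) (p u ω : ℝ) : ℝ :=
  (1 - p) * (1 - cdf d ω) /
    ((1 - p) * (1 - cdf d ω) + p * (1 - cdf d (ω * (1 + u) ^ (-(1 : ℝ) / 2))))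

namespace BFDRaux

noncomputable def S (d : ℝ → ℝ) (x : ℝ) : ℝ := ∫ t in Set.Ioi x, d t

variable {d : ℝ → ℝ} {γ Cd : ℝ}

lemma S_pos (h : IsMPT d γ Cd) (x : ℝ) : 0 < S d x := by
  rw [S, setIntegral_pos_iff_support_of_nonneg_ae
    (ae_of_all _ fun t => h.nonneg t) h.integrable.integrableOn]
  have hsub : Set.Ioi (max x 0) ⊆ Function.support d ∩ Set.Ioi x := by
    intro t ht
    have ht' : max x 0 < t := ht
    exact ⟨(h.pos t (lt_of_le_of_lt (le_max_right _ _) ht')).ne',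
      lt_of_le_of_lt (le_max_left _ _) ht'⟩
  calc (0:ENNReal) < volume (Set.Ioi (max x 0)) := by simp [Real.volume_Ioi]
    _ ≤ _ := measure_mono hsub

lemma one_sub_cdf (h : IsMPT d γ Cd) (x : ℝ) : 1 - cdf d x = S d x := by
  have h2 := intervalIntegral.integral_Iic_add_Ioi (b := x) (μ := volume)
    h.integrable.integrableOn h.integrable.integrableOn
  rw [h.integral_one] at h2
  rw [cdf, S] at *
  linarith

end BFDRaux

namespace BFDRaux

lemma key (h : IsMPT d γ Cd) {c : ℝ} (hc0 : 0 < c) (hc1 : c < 1) {a b : ℝ}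
    (ha : 0 ≤ a) (hab : a < b) :
    S d (a * c) * S d b < S d a * S d (b * c) := by
  set g : ℝ → ℝ := fun x => d (x * c) with hgdef
  have hgint : Integrable g := h.integrable.comp_mul_right' hc0.ne'
  have hθ : (1:ℝ) < c⁻¹ := (one_lt_inv₀ hc0).2 hc1
  have hmlr := h.mlr c⁻¹ hθ
  have hdiv : ∀ x : ℝ, x / c⁻¹ = x * c := fun x => by field_simp
  set r : ℝ := d (b * c) / d b with hrdef
  have hb0 : 0 < b := lt_of_le_of_lt ha hab
  have hdb : 0 < d b := h.pos b hb0
  -- pointwise bounds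
  have hub : ∀ x ∈ Set.Ioc a b, g x ≤ r * d x := by
    intro x hx
    have hx0 : 0 < x := lt_of_le_of_lt ha hx.1
    have hdx : 0 < d x := h.pos x hx0
    have hle : d (x / c⁻¹) / d x ≤ d (b / c⁻¹) / d b := by
      rcases eq_or_lt_of_le hx.2 with he | hlt
      · rw [he]
      · exact le_of_lt (hmlr (Set.mem_Ioi.2 hx0) (Set.mem_Ioi.2 hb0) hlt)
    rw [hdiv, hdiv, div_le_div_iff₀ hdx hdb] at hle
    rw [hgdef, hrdef]
    dsimp only
    rw [div_mul_eq_mul_div, le_div_iff₀ hdb]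
    nlinarith [hle]
  have hlb : ∀ y ∈ Set.Ioi b, r * d y < g y := by
    intro y hy
    have hy0 : 0 < y := lt_trans hb0 hy
    have hdy : 0 < d y := h.pos y hy0
    have hlt : d (b / c⁻¹) / d b < d (y / c⁻¹) / d y :=
      hmlr (Set.mem_Ioi.2 hb0) (Set.mem_Ioi.2 hy0) hy
    rw [hdiv, hdiv, div_lt_div_iff₀ hdb hdy] at hlt
    rw [hgdef, hrdef]
    dsimp only
    rw [div_mul_eq_mul_div, div_lt_iff₀ hdb]
    nlinarith [hlt]
  have hdIoc : IntegrableOn d (Set.Ioc a b) := h.integrable.integrableOn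
  have hgIoc : IntegrableOn g (Set.Ioc a b) := hgint.integrableOn
  have hdIoi : IntegrableOn d (Set.Ioi b) := h.integrable.integrableOn
  have hgIoi : IntegrableOn g (Set.Ioi b) := hgint.integrableOn
  have hA : 0 < ∫ t in Set.Ioc a b, d t := by
    rw [setIntegral_pos_iff_support_of_nonneg_ae (ae_of_all _ fun t => h.nonneg t) hdIoc]
    have hsub : Set.Ioc a b ⊆ Function.support d ∩ Set.Ioc a b :=
      fun t ht => ⟨(h.pos t (lt_of_le_of_lt ha ht.1)).ne', ht⟩
    calc (0:ENNReal) < volume (Set.Ioc a b) := by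
          rw [Real.volume_Ioc]; exact ENNReal.ofReal_pos.2 (by linarith)
      _ ≤ _ := measure_mono hsub
  have hB : 0 < ∫ t in Set.Ioi b, d t := S_pos h b
  have hG1 : ∫ t in Set.Ioc a b, g t ≤ r * ∫ t in Set.Ioc a b, d t := by
    rw [← integral_const_mul]
    exact setIntegral_mono_on hgIoc (hdIoc.const_mul r) measurableSet_Ioc hub
  have hG2 : r * ∫ t in Set.Ioi b, d t < ∫ t in Set.Ioi b, g t := by
    have hpos : 0 < ∫ t in Set.Ioi b, (g t - r * d t) := by
      rw [setIntegral_pos_iff_support_of_nonneg_ae]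
      · have hsub : Set.Ioi b ⊆ Function.support (fun t => g t - r * d t) ∩ Set.Ioi b :=
          fun y hy => ⟨by have := hlb y hy; intro hzero; simp at hzero; linarith, hy⟩
        calc (0:ENNReal) < volume (Set.Ioi b) := by simp [Real.volume_Ioi]
          _ ≤ _ := measure_mono hsub
      · rw [EventuallyLE, ae_restrict_iff' measurableSet_Ioi]
        exact ae_of_all _ fun y hy => by simpa using le_of_lt (hlb y hy)
      · exact hgIoi.sub (hdIoi.const_mul r)
    rw [integral_sub hgIoi (hdIoi.const_mul r), integral_const_mul] at hpos
    linarith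
  have hsplit : ∀ f : ℝ → ℝ, IntegrableOn f (Set.Ioc a b) → IntegrableOn f (Set.Ioi b) →
      ∫ t in Set.Ioi a, f t = (∫ t in Set.Ioc a b, f t) + ∫ t in Set.Ioi b, f t := by
    intro f h1 h2
    rw [← setIntegral_union (Set.Ioc_disjoint_Ioi le_rfl) measurableSet_Ioi h1 h2,
      Set.Ioc_union_Ioi_eq_Ioi hab.le]
  have hchg : ∀ x : ℝ, S d (x * c) = c * ∫ t in Set.Ioi x, g t := by
    intro x
    have hcv := integral_comp_mul_right_Ioi d x hc0
    rw [smul_eq_mul] at hcv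
    rw [S, hgdef]
    rw [show (∫ t in Set.Ioi x, d (t * c)) = c⁻¹ * ∫ t in Set.Ioi (x * c), d t from hcv] at *
    field_simp
  rw [hchg a, hchg b, S, S,
    hsplit d hdIoc hdIoi, hsplit g hgIoc hgIoi]
  nlinarith [mul_le_mul_of_nonneg_right hG1 hB.le, mul_lt_mul_of_pos_left hG2 hA,
    mul_pos hA hB, hc0]

end BFDRaux

namespace BFDRaux

lemma tail_S (h : IsMPT d γ Cd) :
    Tendsto (fun x => S d x * x ^ γ) atTop (nhds (Cd / γ)) := by
  have hγ := h.gamma_pos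
  refine tendsto_order.2 ⟨?_, ?_⟩
  · intro m hm
    have hm' : m * γ < Cd := (lt_div_iff₀ hγ).1 hm
    set ε : ℝ := (Cd - γ * m) / 2 with hεdef
    have hε0 : 0 < ε := by rw [hεdef]; nlinarith
    have hev : ∀ᶠ t in atTop, Cd - ε < d t * t ^ (γ + 1) :=
      h.tail.eventually (eventually_gt_nhds (by linarith))
    rw [eventually_atTop] at hev
    obtain ⟨x₀, hx₀⟩ := hev
    rw [eventually_atTop]
    refine ⟨max x₀ 1, fun x hx => ?_⟩
    have hx1 : (1:ℝ) ≤ x := le_trans (le_max_right _ _) hx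
    have hx0 : (0:ℝ) < x := lt_of_lt_of_le one_pos hx1
    have hlow : ∀ t ∈ Set.Ioi x, (Cd - ε) * t ^ (-(γ + 1)) ≤ d t := by
      intro t ht
      have ht0 : 0 < t := lt_trans hx0 ht
      have h1 := hx₀ t (le_trans (le_max_left _ _) (le_trans hx ht.le))
      have htp : 0 < t ^ (γ + 1) := Real.rpow_pos_of_pos ht0 _
      rw [Real.rpow_neg ht0.le, ← div_eq_mul_inv, div_le_iff₀ htp]
      linarith
    have hint_r : IntegrableOn (fun t : ℝ => (Cd - ε) * t ^ (-(γ + 1))) (Set.Ioi x) :=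
      (integrableOn_Ioi_rpow_of_lt (by linarith) hx0).const_mul _
    have hle := setIntegral_mono_on hint_r h.integrable.integrableOn measurableSet_Ioi hlow
    rw [integral_const_mul, integral_Ioi_rpow_of_lt (by linarith) hx0] at hle
    have hxg : 0 < x ^ γ := Real.rpow_pos_of_pos hx0 _
    have hxne : x ^ (-γ) * x ^ γ = 1 := by
      rw [← Real.rpow_add hx0]; simp
    have heq : -x ^ (-(γ + 1) + 1) / (-(γ + 1) + 1) = x ^ (-γ) / γ := by
      rw [show -(γ + 1) + 1 = -γ by ring]
      field_simp
    rw [heq] at hle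
    have hval : (Cd - ε) * (x ^ (-γ) / γ) * x ^ γ = (Cd - ε) / γ := by
      calc (Cd - ε) * (x ^ (-γ) / γ) * x ^ γ = (Cd - ε) / γ * (x ^ (-γ) * x ^ γ) := by ring
        _ = (Cd - ε) / γ := by rw [hxne, mul_one]
    calc m < (Cd - ε) / γ := by rw [lt_div_iff₀ hγ, hεdef]; nlinarith
      _ = (Cd - ε) * (x ^ (-γ) / γ) * x ^ γ := hval.symm
      _ ≤ S d x * x ^ γ := mul_le_mul_of_nonneg_right hle hxg.le
  · intro M hM
    have hM' : Cd < M * γ := (div_lt_iff₀ hγ).1 hM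
    set ε : ℝ := (γ * M - Cd) / 2 with hεdef
    have hε0 : 0 < ε := by rw [hεdef]; nlinarith
    have hev : ∀ᶠ t in atTop, d t * t ^ (γ + 1) < Cd + ε :=
      h.tail.eventually (eventually_lt_nhds (by linarith))
    rw [eventually_atTop] at hev
    obtain ⟨x₀, hx₀⟩ := hev
    rw [eventually_atTop]
    refine ⟨max x₀ 1, fun x hx => ?_⟩
    have hx1 : (1:ℝ) ≤ x := le_trans (le_max_right _ _) hx
    have hx0 : (0:ℝ) < x := lt_of_lt_of_le one_pos hx1
    have hhigh : ∀ t ∈ Set.Ioi x, d t ≤ (Cd + ε) * t ^ (-(γ + 1)) := by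
      intro t ht
      have ht0 : 0 < t := lt_trans hx0 ht
      have h1 := hx₀ t (le_trans (le_max_left _ _) (le_trans hx ht.le))
      have htp : 0 < t ^ (γ + 1) := Real.rpow_pos_of_pos ht0 _
      rw [Real.rpow_neg ht0.le, ← div_eq_mul_inv, le_div_iff₀ htp]
      linarith
    have hint_r : IntegrableOn (fun t : ℝ => (Cd + ε) * t ^ (-(γ + 1))) (Set.Ioi x) :=
      (integrableOn_Ioi_rpow_of_lt (by linarith) hx0).const_mul _
    have hle := setIntegral_mono_on h.integrable.integrableOn hint_r measurableSet_Ioi hhigh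
    rw [integral_const_mul, integral_Ioi_rpow_of_lt (by linarith) hx0] at hle
    have hxg : 0 < x ^ γ := Real.rpow_pos_of_pos hx0 _
    have hxne : x ^ (-γ) * x ^ γ = 1 := by
      rw [← Real.rpow_add hx0]; simp
    have heq : -x ^ (-(γ + 1) + 1) / (-(γ + 1) + 1) = x ^ (-γ) / γ := by
      rw [show -(γ + 1) + 1 = -γ by ring]
      field_simp
    rw [heq] at hle
    have hval : (Cd + ε) * (x ^ (-γ) / γ) * x ^ γ = (Cd + ε) / γ := by
      calc (Cd + ε) * (x ^ (-γ) / γ) * x ^ γ = (Cd + ε) / γ * (x ^ (-γ) * x ^ γ) := by ring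
        _ = (Cd + ε) / γ := by rw [hxne, mul_one]
    calc S d x * x ^ γ ≤ (Cd + ε) * (x ^ (-γ) / γ) * x ^ γ :=
          mul_le_mul_of_nonneg_right hle hxg.le
      _ = (Cd + ε) / γ := hval
      _ < M := by rw [div_lt_iff₀ hγ, hεdef]; nlinarith

end BFDRaux

open BFDRaux

/-- For an even MPT density, the BFDR of a fixed thresholding procedure is strictly decreasing
in the threshold `ω` on `[0, ∞)`, equals `1 - p` at `ω = 0`, and tends to
`β* = (1 + (1 + u) ^ (γ/2) * p / (1 - p))⁻¹` as `ω → ∞`; in particular it only takes values in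
the interval `(β*, 1 - p]`. -/

theorem BFDR_strictAnti_and_range (d : ℝ → ℝ) (γ Cd : ℝ) (h : IsMPT d γ Cd)
    (heven : ∀ x, d (-x) = d x)
    (p u : ℝ) (hp : p ∈ Set.Ioo (0 : ℝ) 1) (hu : 0 < u) :
    StrictAntiOn (fun ω => BFDR d p u ω) (Set.Ici 0) ∧
    BFDR d p u 0 = 1 - p ∧
    Tendsto (fun ω => BFDR d p u ω) atTop
      (nhds (1 + (1 + u) ^ (γ / 2) * p / (1 - p))⁻¹) ∧
    ∀ ω ≥ 0, BFDR d p u ω ∈ Set.Ioc (1 + (1 + u) ^ (γ / 2) * p / (1 - p))⁻¹ (1 - p) := by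
  obtain ⟨hp0, hp1⟩ := hp
  have h1p : (0:ℝ) < 1 - p := by linarith
  have h1u : (0:ℝ) < 1 + u := by linarith
  set c : ℝ := (1 + u) ^ (-(1:ℝ)/2) with hcdef
  have hc0 : 0 < c := Real.rpow_pos_of_pos h1u _
  have hc1 : c < 1 := Real.rpow_lt_one_of_one_lt_of_neg (by linarith) (by norm_num)
  set q : ℝ := p / (1 - p) with hqdef
  have hq0 : 0 < q := div_pos hp0 h1p
  -- the basic reformulation
  have hbfdr : ∀ ω : ℝ, BFDR d p u ω = (1 + q * (S d (ω * c) / S d ω))⁻¹ := by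
    intro ω
    have h1 := S_pos h ω
    have h2 := S_pos h (ω * c)
    have hden : 0 < (1 - p) * S d ω + p * S d (ω * c) :=
      add_pos (mul_pos h1p h1) (mul_pos hp0 h2)
    have hden2 : 0 < 1 + q * (S d (ω * c) / S d ω) :=
      add_pos_of_pos_of_nonneg one_pos (mul_nonneg hq0.le (div_pos h2 h1).le)
    simp only [BFDR, ← hcdef, one_sub_cdf h]
    rw [inv_eq_one_div, div_eq_div_iff hden.ne' hden2.ne', hqdef]
    field_simp
  -- strict antitonicity
  have hanti : StrictAntiOn (fun ω => BFDR d p u ω) (Set.Ici 0) := by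
    intro a ha b hb hab
    have ha' : (0:ℝ) ≤ a := ha
    simp only [hbfdr]
    have hRab : S d (a * c) / S d a < S d (b * c) / S d b := by
      rw [div_lt_div_iff₀ (S_pos h a) (S_pos h b)]
      nlinarith [key h hc0 hc1 ha' hab]
    have hpos : 0 < 1 + q * (S d (a * c) / S d a) :=
      add_pos_of_pos_of_nonneg one_pos
        (mul_nonneg hq0.le (div_pos (S_pos h (a * c)) (S_pos h a)).le)
    exact inv_strictAnti₀ hpos (by nlinarith [mul_lt_mul_of_pos_left hRab hq0])
  -- value at zero
  have hzero : BFDR d p u 0 = 1 - p := by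
    rw [hbfdr 0, zero_mul, div_self (S_pos h 0).ne', mul_one, hqdef]
    rw [show 1 + p / (1 - p) = (1 - p)⁻¹ by field_simp; ring]
    rw [inv_inv]
  -- the limit
  have hL : (0:ℝ) < Cd / γ := div_pos h.Cd_pos h.gamma_pos
  have h1 : Tendsto (fun ω : ℝ => S d (ω * c) * (ω * c) ^ γ) atTop (nhds (Cd / γ)) :=
    (tail_S h).comp (tendsto_id.atTop_mul_const hc0)
  have h2 := tail_S h
  have h3 : Tendsto (fun ω => (S d (ω * c) * (ω * c) ^ γ) / (S d ω * ω ^ γ)) atTop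
      (nhds ((Cd / γ) / (Cd / γ))) := h1.div h2 hL.ne'
  rw [div_self hL.ne'] at h3
  have h4 : Tendsto (fun ω => (S d (ω * c) * (ω * c) ^ γ) / (S d ω * ω ^ γ) * c ^ (-γ))
      atTop (nhds (1 * c ^ (-γ))) := h3.mul_const _
  rw [one_mul] at h4
  have hK : c ^ (-γ) = (1 + u) ^ (γ / 2) := by
    rw [hcdef, ← Real.rpow_mul h1u.le]
    congr 1
    ring
  have hR : Tendsto (fun ω => S d (ω * c) / S d ω) atTop (nhds ((1 + u) ^ (γ / 2))) := by
    rw [← hK]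
    apply h4.congr'
    filter_upwards [eventually_gt_atTop 0] with ω hω
    have h1' := (S_pos h ω).ne'
    have hcγ : (0:ℝ) < c ^ γ := Real.rpow_pos_of_pos hc0 _
    have hωγ : (0:ℝ) < ω ^ γ := Real.rpow_pos_of_pos hω _
    rw [Real.mul_rpow hω.le hc0.le, Real.rpow_neg hc0.le]
    field_simp
  have hden : (0:ℝ) < 1 + q * (1 + u) ^ (γ / 2) :=
    add_pos_of_pos_of_nonneg one_pos
      (mul_nonneg hq0.le (Real.rpow_pos_of_pos h1u _).le)
  have hlim : Tendsto (fun ω => BFDR d p u ω) atTop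
      (nhds (1 + (1 + u) ^ (γ / 2) * p / (1 - p))⁻¹) := by
    have hfun : (fun ω => BFDR d p u ω) = fun ω => (1 + q * (S d (ω * c) / S d ω))⁻¹ :=
      funext hbfdr
    rw [hfun, show (1 + (1 + u) ^ (γ / 2) * p / (1 - p))⁻¹
        = (1 + q * (1 + u) ^ (γ / 2))⁻¹ by rw [hqdef]; ring_nf]
    exact ((hR.const_mul q).const_add 1).inv₀ hden.ne'
  refine ⟨hanti, hzero, hlim, fun ω hω => ?_⟩
  constructor
  · have hmem1 : ω + 1 ∈ Set.Ici (0:ℝ) := by simp; linarith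
    have hstep : BFDR d p u (ω + 1) < BFDR d p u ω := hanti hω hmem1 (by linarith)
    have hge : (1 + (1 + u) ^ (γ / 2) * p / (1 - p))⁻¹ ≤ BFDR d p u (ω + 1) := by
      apply le_of_tendsto hlim
      filter_upwards [eventually_ge_atTop (ω + 1)] with x hx
      rcases eq_or_lt_of_le hx with he | hlt
      · rw [← he]
      · exact le_of_lt (hanti hmem1 (Set.mem_Ici.2 (by linarith [Set.mem_Ici.1 hmem1])) hlt)
    linarith
  · rcases eq_or_lt_of_le hω with he | hlt
    · rw [← he, hzero]
    · rw [← hzero]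
      exact le_of_lt (hanti Set.self_mem_Ici hω hlt)
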